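/- arXiv:2004.10422 — 2 statements merged into one kernel-verified Lean document; each statement's English description precedes it below -/
import Mathlib

section
/- Let K_n be the complete graph on vertex set [n] = {1,...,n} and G' a subgraph of K_n, with edge ideals J = I(G') and I = I(K_n) in K[x_1,...,x_n] over a field K. Then J ∩ I^t = J·I^{t-1} for all t ≥ 1 if and only if G' is a complete multipartite graph on the vertex set [n], i.e., there is a partition of [n] into nonempty disjoint parts A_1, ..., A_k such that {u,v} is an edge of G' exactly when u and v lie in different parts. -/
/-- The edge ideal of a finite simple graph on `[n]`: the ideal of `K[x_1,…,x_n]`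
generated by the monomials `x_i x_j` with `{i,j}` an edge of `G`. -/
noncomputable def edgeIdeal (K : Type) [Field K] {n : ℕ} (G : SimpleGraph (Fin n)) :
    Ideal (MvPolynomial (Fin n) K) :=
  Ideal.span {p | ∃ i j : Fin n, G.Adj i j ∧ p = MvPolynomial.X i * MvPolynomial.X j}

namespace VVaux
open Finsupp

variable {n : ℕ}

/-- The exponent vector of an edge monomial. -/
noncomputable def eV (i j : Fin n) : Fin n →₀ ℕ := Finsupp.single i 1 + Finsupp.single j 1

/-- `ESum t s` : `s` is a sum of `t` edge vectors of the complete graph. -/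
def ESum : ℕ → (Fin n →₀ ℕ) → Prop
  | 0, s => s = 0
  | (t+1), s => ∃ i j s', i ≠ j ∧ ESum t s' ∧ s = eV i j + s'

lemma ESum_zero : ESum (n := n) 0 0 := rfl

lemma ESum_succ {i j : Fin n} {t : ℕ} {s : Fin n →₀ ℕ} (h : i ≠ j) (hs : ESum t s) :
    ESum (t+1) (eV i j + s) := ⟨i, j, s, h, hs, rfl⟩

def deg (m : Fin n →₀ ℕ) : ℕ := ∑ i, m i

lemma eV_apply (i j x : Fin n) :
    eV i j x = (if i = x then 1 else 0) + (if j = x then 1 else 0) := by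
  simp [eV, Finsupp.single_apply]

lemma eV_apply_le {i j : Fin n} (h : i ≠ j) (x : Fin n) : eV i j x ≤ 1 := by
  rw [eV_apply]
  by_cases h1 : i = x <;> by_cases h2 : j = x <;> simp_all

lemma one_le_of_eV_le {i j : Fin n} {m : Fin n →₀ ℕ} (h : i ≠ j) (hle : eV i j ≤ m) :
    1 ≤ m i ∧ 1 ≤ m j := by
  have h1 := Finsupp.le_def.mp hle i
  have h2 := Finsupp.le_def.mp hle j
  rw [eV_apply] at h1 h2
  simp [h, Ne.symm h] at h1 h2
  omega

lemma deg_add (a b : Fin n →₀ ℕ) : deg (a + b) = deg a + deg b := by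
  simp [deg, Finset.sum_add_distrib]

lemma deg_eV (i j : Fin n) : deg (eV i j) = 2 := by
  simp [deg, eV_apply, Finset.sum_add_distrib]

lemma deg_mono {a b : Fin n →₀ ℕ} (h : a ≤ b) : deg a ≤ deg b :=
  Finset.sum_le_sum fun i _ => Finsupp.le_def.mp h i

lemma deg_erase (m : Fin n →₀ ℕ) (i : Fin n) :
    deg m = m i + ∑ x ∈ Finset.univ.erase i, m x :=
  (Finset.add_sum_erase _ _ (Finset.mem_univ i)).symm

lemma sum3_le {m : Fin n →₀ ℕ} {i j a : Fin n} (hij : i ≠ j) (hia : i ≠ a) (hja : j ≠ a) :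
    m i + m j + m a ≤ deg m := by
  have h1 : ({i, j, a} : Finset (Fin n)).sum m ≤ deg m :=
    Finset.sum_le_sum_of_subset (Finset.subset_univ _)
  rw [Finset.sum_insert (by simp [hij, hia]), Finset.sum_insert (by simp [hja]),
    Finset.sum_singleton] at h1
  omega

lemma ESum_deg {t : ℕ} {s : Fin n →₀ ℕ} (h : ESum t s) : deg s = 2 * t := by
  induction t generalizing s with
  | zero => rw [show s = 0 from h]; simp [deg]
  | succ t ih =>
    obtain ⟨i, j, s', hij, hs', rfl⟩ := h
    rw [deg_add, deg_eV, ih hs']; ring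

lemma ESum_apply_le {t : ℕ} {s : Fin n →₀ ℕ} (h : ESum t s) (x : Fin n) : s x ≤ t := by
  induction t generalizing s with
  | zero => rw [show s = 0 from h]; simp
  | succ t ih =>
    obtain ⟨i, j, s', hij, hs', rfl⟩ := h
    have := eV_apply_le hij x
    have := ih hs'
    simp only [Finsupp.add_apply]
    omega

/-- Numeric consequence of `m` dominating a sum of `t` edges. -/
lemma numeric_of_esum {t : ℕ} {s m : Fin n →₀ ℕ} (hs : ESum t s) (hle : s ≤ m) :
    2 * t ≤ deg m ∧ ∀ i, m i + t ≤ deg m := by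
  constructor
  · rw [← ESum_deg hs]; exact deg_mono hle
  · intro i
    have h1 : ∑ x ∈ Finset.univ.erase i, s x ≤ ∑ x ∈ Finset.univ.erase i, m x :=
      Finset.sum_le_sum fun x _ => Finsupp.le_def.mp hle x
    have h2 := deg_erase s i
    have h3 := deg_erase m i
    have h4 := ESum_deg hs
    have h5 := ESum_apply_le hs i
    omega

/-- Greedy construction: the numeric condition suffices to extract `t` edges. -/
lemma esum_of_numeric : ∀ (t : ℕ) (m : Fin n →₀ ℕ), 2 * t ≤ deg m →
    (∀ i, m i + t ≤ deg m) → ∃ s, s ≤ m ∧ ESum t s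
  | 0, m, _, _ => ⟨0, zero_le, ESum_zero⟩
  | (t+1), m, h1, h2 => by
    -- find i maximizing m
    have hne : (Finset.univ : Finset (Fin n)).Nonempty := by
      by_contra h
      rw [Finset.not_nonempty_iff_eq_empty] at h
      simp [deg, h] at h1
    obtain ⟨i, -, hi⟩ := Finset.exists_max_image Finset.univ m hne
    -- find j ≠ i with m j ≥ 1
    have hj1 : ∃ j ∈ Finset.univ.erase i, 1 ≤ m j := by
      by_contra h
      push_neg at h
      have : ∑ x ∈ Finset.univ.erase i, m x = 0 :=
        Finset.sum_eq_zero fun x hx => by have := h x hx; omega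
      have := deg_erase m i
      have := h2 i
      omega
    obtain ⟨j0, hj0, hj0m⟩ := hj1
    obtain ⟨j, hjmem, hj⟩ := Finset.exists_max_image (Finset.univ.erase i) m ⟨j0, hj0⟩
    have hij : i ≠ j := (Finset.ne_of_mem_erase hjmem).symm
    have hmj : 1 ≤ m j := le_trans hj0m (hj j0 hj0)
    have hmi : 1 ≤ m i := le_trans hmj (hi j (Finset.mem_univ j))
    have hev : eV i j ≤ m := by
      rw [Finsupp.le_def]; intro x
      rw [eV_apply]
      by_cases h1 : i = x <;> by_cases h2 : j = x <;> simp_all <;> omega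
    set m' := m - eV i j with hm'
    have hm'app : ∀ x, m' x = m x - eV i j x := fun x => Finsupp.tsub_apply m (eV i j) x
    have hdeg' : deg m' + 2 = deg m := by
      have : m' + eV i j = m := tsub_add_cancel_of_le hev
      calc deg m' + 2 = deg m' + deg (eV i j) := by rw [deg_eV]
        _ = deg (m' + eV i j) := (deg_add _ _).symm
        _ = deg m := by rw [this]
    have hc1 : 2 * t ≤ deg m' := by omega
    have hc2 : ∀ a, m' a + t ≤ deg m' := by
      intro a
      rw [hm'app, eV_apply]
      by_cases hia : i = a
      · subst hia; have := h2 i; simp [Ne.symm hij]; omega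
      · by_cases hja : j = a
        · subst hja; have := h2 j; simp [hij]; omega
        · simp [hia, hja]
          -- a distinct from i, j
          by_contra hcon
          push_neg at hcon
          have hs3 : m i + m j + m a ≤ deg m := sum3_le hij (fun h => hia h) (fun h => hja h)
          have h6 : m a ≤ m i := hi a (Finset.mem_univ a)
          have h7 : m a ≤ m j ∨ a = i := by
            by_cases h : a = i
            · right; exact h
            · left; exact hj a (Finset.mem_erase.mpr ⟨h, Finset.mem_univ a⟩)
          rcases h7 with h7 | h7
          · omega
          · exact hia h7.symm
    obtain ⟨s', hs'le, hs'⟩ := esum_of_numeric t m' hc1 hc2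
    refine ⟨eV i j + s', ?_, ESum_succ hij hs'⟩
    rw [Finsupp.le_def]; intro x
    have ha := Finsupp.le_def.mp hs'le x
    have hb := Finsupp.le_def.mp hev x
    rw [hm'app] at ha
    simp only [Finsupp.add_apply]
    omega

/-- The key extraction lemma: if `m` dominates a `G'`-edge (w.r.t. the relation `R`)
and a sum of `t+1` complete-graph edges, then it dominates a `G'`-edge plus a sum of
`t` complete-graph edges (disjointly). -/
lemma extract {R : Fin n → Fin n → Prop}
    (hR : ∀ u w M, R u w → R M u ∨ R M w)
    (hne : ∀ u w, R u w → u ≠ w) (t : ℕ) (m : Fin n →₀ ℕ)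
    (h1 : ∃ u w, R u w ∧ eV u w ≤ m) (h2 : ∃ s, s ≤ m ∧ ESum (t+1) s) :
    ∃ u w s', R u w ∧ ESum t s' ∧ eV u w + s' ≤ m := by
  obtain ⟨u, w, hRuw, huw⟩ := h1
  obtain ⟨s, hsle, hs⟩ := h2
  obtain ⟨hd1, hd2⟩ := numeric_of_esum hs hsle
  have hmu := one_le_of_eV_le (hne u w hRuw) huw
  -- pick M maximizing m
  have hnemp : (Finset.univ : Finset (Fin n)).Nonempty := ⟨u, Finset.mem_univ u⟩
  obtain ⟨M, -, hM⟩ := Finset.exists_max_image Finset.univ m hnemp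
  have hmM : 1 ≤ m M := le_trans hmu.1 (hM u (Finset.mem_univ u))
  -- pick y with R M y and m y ≥ 1
  obtain ⟨y, hRMy, hmy⟩ : ∃ y, R M y ∧ 1 ≤ m y := by
    rcases hR u w M hRuw with h | h
    · exact ⟨u, h, hmu.1⟩
    · exact ⟨w, h, hmu.2⟩
  have hMy : M ≠ y := hne M y hRMy
  have hev : eV M y ≤ m := by
    rw [Finsupp.le_def]; intro x
    rw [eV_apply]
    by_cases e1 : M = x <;> by_cases e2 : y = x <;> simp_all <;> omega
  set m' := m - eV M y with hm'
  have hm'app : ∀ x, m' x = m x - eV M y x := fun x => Finsupp.tsub_apply m (eV M y) x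
  have hdeg' : deg m' + 2 = deg m := by
    have h0 : m' + eV M y = m := tsub_add_cancel_of_le hev
    calc deg m' + 2 = deg m' + deg (eV M y) := by rw [deg_eV]
      _ = deg (m' + eV M y) := (deg_add _ _).symm
      _ = deg m := by rw [h0]
  have hc1 : 2 * t ≤ deg m' := by omega
  have hc2 : ∀ a, m' a + t ≤ deg m' := by
    intro a
    rw [hm'app, eV_apply]
    by_cases hia : M = a
    · subst hia; have := hd2 M; simp [Ne.symm hMy]; omega
    · by_cases hja : y = a
      · subst hja
        have h8 := hM y (Finset.mem_univ y)
        have := hd2 M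
        simp [hMy]; omega
      · simp [hia, hja]
        by_contra hcon
        push_neg at hcon
        have hs3 : m M + m y + m a ≤ deg m := sum3_le hMy (fun h => hia h) (fun h => hja h)
        have h6 : m a ≤ m M := hM a (Finset.mem_univ a)
        have h9 := hd2 a
        omega
  obtain ⟨s', hs'le, hs'⟩ := esum_of_numeric t m' hc1 hc2
  refine ⟨M, y, s', hRMy, hs', ?_⟩
  rw [Finsupp.le_def]; intro x
  have ha := Finsupp.le_def.mp hs'le x
  have hb := Finsupp.le_def.mp hev x
  rw [hm'app] at ha
  simp only [Finsupp.add_apply]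
  omega

open MvPolynomial
open scoped Pointwise

variable {K : Type} [Field K]

lemma X_mul_X_eq (i j : Fin n) :
    (X i * X j : MvPolynomial (Fin n) K) = monomial (eV i j) 1 := by
  have h1 : (X i : MvPolynomial (Fin n) K) = monomial (Finsupp.single i 1) 1 := rfl
  have h2 : (X j : MvPolynomial (Fin n) K) = monomial (Finsupp.single j 1) 1 := rfl
  rw [h1, h2, monomial_mul, one_mul, eV]

lemma edgeIdeal_eq (G : SimpleGraph (Fin n)) :
    edgeIdeal K G = Ideal.span ((fun s => monomial s (1:K)) ''
      {s | ∃ i j, G.Adj i j ∧ s = eV i j}) := by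
  unfold edgeIdeal
  congr 1
  ext p
  constructor
  · rintro ⟨i, j, h, rfl⟩
    exact ⟨eV i j, ⟨i, j, h, rfl⟩, (X_mul_X_eq i j).symm⟩
  · rintro ⟨s, ⟨i, j, h, rfl⟩, rfl⟩
    exact ⟨i, j, h, (X_mul_X_eq i j).symm⟩

lemma span_image_mul (A B : Set (Fin n →₀ ℕ)) :
    Ideal.span ((fun s => monomial s (1:K)) '' A) * Ideal.span ((fun s => monomial s (1:K)) '' B)
      = Ideal.span ((fun s => monomial s (1:K)) '' (A + B)) := by
  rw [Ideal.span_mul_span']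
  congr 1
  ext p
  constructor
  · rintro ⟨x, ⟨a, ha, rfl⟩, y, ⟨b, hb, rfl⟩, rfl⟩
    exact ⟨a + b, ⟨a, ha, b, hb, rfl⟩, by dsimp only; rw [monomial_mul, one_mul]⟩
  · rintro ⟨s, ⟨a, ha, b, hb, rfl⟩, rfl⟩
    exact ⟨monomial a 1, ⟨a, ha, rfl⟩, monomial b 1, ⟨b, hb, rfl⟩,
      by dsimp only; rw [monomial_mul, one_mul]⟩

lemma top_pow_eq (t : ℕ) :
    (edgeIdeal K (⊤ : SimpleGraph (Fin n))) ^ t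
      = Ideal.span ((fun s => monomial s (1:K)) '' {s | ESum t s}) := by
  induction t with
  | zero =>
    rw [pow_zero]
    have h0 : {s : Fin n →₀ ℕ | ESum 0 s} = {0} := by
      ext s; exact ⟨fun h => h, fun h => h⟩
    rw [h0, Set.image_singleton]
    have h1 : (monomial (0 : Fin n →₀ ℕ) (1:K)) = 1 := by
      simp [monomial_zero']
    rw [h1, Ideal.span_singleton_one, Ideal.one_eq_top]
  | succ t ih =>
    have hset : {s : Fin n →₀ ℕ | ESum t s} +
        {s : Fin n →₀ ℕ | ∃ i j : Fin n, (⊤ : SimpleGraph (Fin n)).Adj i j ∧ s = eV i j}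
        = {s : Fin n →₀ ℕ | ESum (t+1) s} := by
      ext s
      simp only [Set.mem_add, Set.mem_setOf_eq, SimpleGraph.top_adj]
      constructor
      · rintro ⟨a, ha, b, ⟨i, j, hij, rfl⟩, rfl⟩
        exact ⟨i, j, a, hij, ha, add_comm a (eV i j)⟩
      · rintro ⟨i, j, s', hij, hs', rfl⟩
        exact ⟨s', hs', eV i j, ⟨i, j, hij, rfl⟩, add_comm s' (eV i j)⟩
    rw [pow_succ, ih, edgeIdeal_eq, span_image_mul, hset]

lemma edgeIdeal_le_top (G' : SimpleGraph (Fin n)) :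
    edgeIdeal K G' ≤ edgeIdeal K (⊤ : SimpleGraph (Fin n)) := by
  apply Ideal.span_mono
  rintro p ⟨i, j, h, rfl⟩
  exact ⟨i, j, by simp [h.ne], rfl⟩

/-- Forward direction: a complete multipartite graph (given by a coloring) satisfies
the Valabrega–Valla vanishing. -/
lemma ideal_eq_of_coloring {Q : Type} (G' : SimpleGraph (Fin n)) (c : Fin n → Q)
    (hadj : ∀ u v, G'.Adj u v ↔ c u ≠ c v) (t : ℕ) :
    edgeIdeal K G' ⊓ (edgeIdeal K (⊤ : SimpleGraph (Fin n))) ^ (t+1)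
      = edgeIdeal K G' * (edgeIdeal K (⊤ : SimpleGraph (Fin n))) ^ t := by
  apply le_antisymm
  · intro p hp
    rw [Submodule.mem_inf] at hp
    obtain ⟨hpJ, hpI⟩ := hp
    rw [edgeIdeal_eq, mem_ideal_span_monomial_image] at hpJ
    rw [top_pow_eq, mem_ideal_span_monomial_image] at hpI
    rw [edgeIdeal_eq, top_pow_eq, span_image_mul, mem_ideal_span_monomial_image]
    intro m hm
    obtain ⟨sJ, ⟨u, w, huw, rfl⟩, hJle⟩ := hpJ m hm
    obtain ⟨sI, hsI, hIle⟩ := hpI m hm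
    have hR : ∀ u w M : Fin n, G'.Adj u w → G'.Adj M u ∨ G'.Adj M w := by
      intro u w M h
      by_cases hc : c M = c u
      · right; rw [hadj]; rw [hc]; exact (hadj u w).mp h
      · left; exact (hadj M u).mpr hc
    have key := extract hR (fun u w h => h.ne) t m ⟨u, w, huw, hJle⟩ ⟨sI, hIle, hsI⟩
    obtain ⟨u', w', s', hadj', hs', hle⟩ := key
    exact ⟨eV u' w' + s', ⟨eV u' w', ⟨u', w', hadj', rfl⟩, s', hs', rfl⟩, hle⟩
  · apply le_inf
    · exact (Ideal.mul_le_left : edgeIdeal K G' * (edgeIdeal K (⊤ : SimpleGraph (Fin n))) ^ t ≤ edgeIdeal K G')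
    · calc edgeIdeal K G' * (edgeIdeal K (⊤ : SimpleGraph (Fin n))) ^ t
          ≤ edgeIdeal K (⊤ : SimpleGraph (Fin n)) *
              (edgeIdeal K (⊤ : SimpleGraph (Fin n))) ^ t :=
            Ideal.mul_mono_left (edgeIdeal_le_top G')
        _ = (edgeIdeal K (⊤ : SimpleGraph (Fin n))) ^ (t+1) := by rw [pow_succ, mul_comm]

/-- Backward direction core: the vanishing at `t = 2` forces non-adjacency (plus
equality) to be transitive. -/
lemma no_bad_triple (G' : SimpleGraph (Fin n))
    (h : edgeIdeal K G' ⊓ (edgeIdeal K (⊤ : SimpleGraph (Fin n))) ^ 2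
       = edgeIdeal K G' * (edgeIdeal K (⊤ : SimpleGraph (Fin n))) ^ 1)
    {u v w : Fin n} (hneuv : u ≠ v) (hnevw : v ≠ w) (huv : ¬ G'.Adj u v)
    (hvw : ¬ G'.Adj v w) (hA : G'.Adj u w) : False := by
  have huw : u ≠ w := hA.ne
  have hvu : v ≠ u := Ne.symm hneuv
  have hwv : w ≠ v := Ne.symm hnevw
  have hwu : w ≠ u := Ne.symm huw
  set m : Fin n →₀ ℕ := eV u w + Finsupp.single v 2 with hm
  have hmu : m u = 1 := by
    rw [hm, Finsupp.add_apply, eV_apply, if_pos rfl, if_neg hwu,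
      Finsupp.single_apply, if_neg hvu]
    omega
  have hmv : m v = 2 := by
    rw [hm, Finsupp.add_apply, eV_apply, if_neg hneuv, if_neg hwv,
      Finsupp.single_apply, if_pos rfl]
  have hmw : m w = 1 := by
    rw [hm, Finsupp.add_apply, eV_apply, if_neg huw, if_pos rfl,
      Finsupp.single_apply, if_neg hnevw]
    omega
  have hm_only : ∀ x, 1 ≤ m x → x = u ∨ x = v ∨ x = w := by
    intro x hx
    by_contra hc
    push_neg at hc
    obtain ⟨h1, h2, h3⟩ := hc
    rw [hm, Finsupp.add_apply, eV_apply, if_neg (fun e => h1 e.symm),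
      if_neg (fun e => h3 e.symm), Finsupp.single_apply, if_neg (fun e => h2 e.symm)] at hx
    omega
  -- the monomial x_u x_v^2 x_w lies in J ⊓ I²
  set p : MvPolynomial (Fin n) K := monomial m 1 with hp
  have hsupp : p.support = {m} := by
    classical
    rw [hp, support_monomial, if_neg (one_ne_zero : (1:K) ≠ 0)]
  have hm2 : m = eV u v + eV v w := by
    ext x
    simp only [hm, Finsupp.add_apply, eV_apply, Finsupp.single_apply]
    split_ifs <;> omega
  have hpJ : p ∈ edgeIdeal K G' := by
    rw [edgeIdeal_eq, mem_ideal_span_monomial_image]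
    intro xi hxi
    rw [hsupp, Finset.mem_singleton] at hxi
    subst hxi
    exact ⟨eV u w, ⟨u, w, hA, rfl⟩, by rw [hm]; exact self_le_add_right _ _⟩
  have hpI : p ∈ (edgeIdeal K (⊤ : SimpleGraph (Fin n))) ^ 2 := by
    rw [top_pow_eq, mem_ideal_span_monomial_image]
    intro xi hxi
    rw [hsupp, Finset.mem_singleton] at hxi
    subst hxi
    have h1 : ESum 1 (eV v w) := by
      have := ESum_succ hnevw (ESum_zero (n := n))
      rwa [add_zero] at this
    exact ⟨m, by rw [hm2]; exact ESum_succ hneuv h1, le_refl m⟩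
  have hpmem : p ∈ edgeIdeal K G' * (edgeIdeal K (⊤ : SimpleGraph (Fin n))) ^ 1 := by
    rw [← h, Submodule.mem_inf]; exact ⟨hpJ, hpI⟩
  rw [edgeIdeal_eq, top_pow_eq, span_image_mul, mem_ideal_span_monomial_image] at hpmem
  obtain ⟨s, hsmem, hsle⟩ := hpmem m (by rw [hsupp]; exact Finset.mem_singleton_self m)
  obtain ⟨e, ⟨a, b, hab, rfl⟩, f, hf, rfl⟩ := hsmem
  obtain ⟨c, d, f0, hcd, hf0, rfl⟩ := hf
  rw [show f0 = 0 from hf0, add_zero] at hsle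
  have hab' : a ≠ b := hab.ne
  -- the inner core: once we know the G'-edge is {u,w}, derive the contradiction
  have core : ∀ c d : Fin n, c ≠ d → eV u w + eV c d ≤ m → False := by
    intro c d hcd hle
    have hub : ∀ x, eV u w x + eV c d x ≤ m x := by
      intro x
      have := Finsupp.le_def.mp hle x
      rwa [Finsupp.add_apply] at this
    have hEcd_le : eV c d ≤ m := le_trans (self_le_add_left _ _) hle
    obtain ⟨hc1, hd1⟩ := one_le_of_eV_le hcd hEcd_le
    have evalself : ∀ x y : Fin n, eV x y x ≥ 1 := by
      intro x y; rw [eV_apply, if_pos rfl]; omega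
    have evalsnd : ∀ x y : Fin n, eV x y y ≥ 1 := by
      intro x y
      rw [eV_apply]
      by_cases hxy : x = y
      · rw [if_pos hxy, if_pos rfl]; omega
      · rw [if_pos rfl]; omega
    have atw : ∀ x : Fin n, eV c d w ≥ 1 → False := by
      intro x hx
      have h5 := hub w
      rw [eV_apply u, if_neg huw, if_pos rfl, hmw] at h5
      omega
    have atu' : eV c d u ≥ 1 → False := by
      intro hx
      have h5 := hub u
      rw [eV_apply u, if_pos rfl, if_neg hwu, hmu] at h5
      omega
    rcases hm_only c hc1 with rfl | rfl | rfl
    · exact atu' (evalself c d)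
    · rcases hm_only d hd1 with rfl | rfl | rfl
      · exact atu' (evalsnd c d)
      · exact hcd rfl
      · exact atw c (evalsnd c d)
    · exact atw c (evalself c d)
  -- identify the G'-edge {a,b}
  have hEab_le : eV a b ≤ m := le_trans (self_le_add_right _ _) hsle
  obtain ⟨ha1, hb1⟩ := one_le_of_eV_le hab' hEab_le
  rcases hm_only a ha1 with rfl | rfl | rfl <;> rcases hm_only b hb1 with rfl | rfl | rfl
  · exact hab' rfl
  · exact huv hab
  · exact core c d hcd hsle
  · exact huv (G'.adj_symm hab)
  · exact hab' rfl
  · exact hvw hab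
  · exact core c d hcd (by rwa [show eV a b = eV b a from add_comm _ _] at hsle)
  · exact hvw (G'.adj_symm hab)
  · exact hab' rfl

/-- Package a coloring as a partition into nonempty parts. -/
lemma rhs_of_coloring {Q : Type} [Fintype Q] [DecidableEq Q]
    (G' : SimpleGraph (Fin n)) (c : Fin n → Q)
    (h : ∀ u v, G'.Adj u v ↔ c u ≠ c v) :
    ∃ (k : ℕ) (A : Fin k → Set (Fin n)),
      (∀ i, (A i).Nonempty) ∧
      (∀ i j, i ≠ j → Disjoint (A i) (A j)) ∧
      (⋃ i, A i) = Set.univ ∧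
      (∀ u v : Fin n, G'.Adj u v ↔ ∃ i j, i ≠ j ∧ u ∈ A i ∧ v ∈ A j) := by
  classical
  set S : Finset Q := Finset.image c Finset.univ with hS
  set e := Fintype.equivFin ↥S with he
  refine ⟨Fintype.card ↥S, fun i => c ⁻¹' {((e.symm i : ↥S) : Q)}, ?_, ?_, ?_, ?_⟩
  · intro i
    obtain ⟨v, -, hv⟩ := Finset.mem_image.mp (e.symm i).2
    exact ⟨v, hv⟩
  · intro i j hij
    rw [Set.disjoint_left]
    intro x hxi hxj
    apply hij
    have : (e.symm i : ↥S) = (e.symm j : ↥S) := Subtype.ext (by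
      rw [← Set.mem_singleton_iff.mp hxi, ← Set.mem_singleton_iff.mp hxj])
    exact e.symm.injective this
  · ext v
    simp only [Set.mem_iUnion, Set.mem_univ, iff_true]
    have hmem : c v ∈ S := Finset.mem_image_of_mem c (Finset.mem_univ v)
    refine ⟨e ⟨c v, hmem⟩, ?_⟩
    simp only [Set.mem_preimage, Set.mem_singleton_iff, Equiv.symm_apply_apply]
  · intro u v
    rw [h u v]
    constructor
    · intro hcne
      have hmu : c u ∈ S := Finset.mem_image_of_mem c (Finset.mem_univ u)
      have hmv : c v ∈ S := Finset.mem_image_of_mem c (Finset.mem_univ v)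
      refine ⟨e ⟨c u, hmu⟩, e ⟨c v, hmv⟩, ?_, ?_, ?_⟩
      · intro hij
        apply hcne
        have := congrArg e.symm hij
        rw [Equiv.symm_apply_apply, Equiv.symm_apply_apply] at this
        exact congrArg Subtype.val this
      · simp only [Set.mem_preimage, Set.mem_singleton_iff, Equiv.symm_apply_apply]
      · simp only [Set.mem_preimage, Set.mem_singleton_iff, Equiv.symm_apply_apply]
    · rintro ⟨i, j, hij, hu, hv⟩
      rw [Set.mem_preimage, Set.mem_singleton_iff] at hu hv
      intro hcc
      apply hij
      apply e.symm.injective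
      exact Subtype.ext (by rw [← hu, ← hv, hcc])

/-- Extract a coloring from the partition data. -/
lemma coloring_of_rhs {k : ℕ} (G' : SimpleGraph (Fin n)) (A : Fin k → Set (Fin n))
    (hdisj : ∀ i j, i ≠ j → Disjoint (A i) (A j))
    (huniv : (⋃ i, A i) = Set.univ)
    (hadj : ∀ u v : Fin n, G'.Adj u v ↔ ∃ i j, i ≠ j ∧ u ∈ A i ∧ v ∈ A j) :
    ∃ c : Fin n → Fin k, ∀ u v, G'.Adj u v ↔ c u ≠ c v := by
  have hex : ∀ v : Fin n, ∃ i, v ∈ A i := by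
    intro v
    have : v ∈ ⋃ i, A i := by rw [huniv]; trivial
    exact Set.mem_iUnion.mp this
  choose c hc using hex
  have hcu : ∀ v i, v ∈ A i → c v = i := by
    intro v i hv
    by_contra hne
    exact Set.disjoint_left.mp (hdisj _ _ hne) (hc v) hv
  refine ⟨c, fun u v => ?_⟩
  rw [hadj u v]
  constructor
  · rintro ⟨i, j, hij, hu, hv⟩
    rw [hcu u i hu, hcu v j hv]
    exact hij
  · intro hne
    exact ⟨c u, c v, hne, hc u, hc v⟩

end VVaux

/-- Let `G'` be a subgraph of the complete graph `K_n` (i.e. any simple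
graph on `[n]`), `J = I(G')` and `I = I(K_n)`.  Then `J ∩ I^t = J·I^{t-1}` for all
`t ≥ 1` iff `G'` is a complete multipartite graph on the vertex set `[n]`: there is a
partition of `[n]` into nonempty pairwise disjoint parts `A_1, …, A_k` such that `{u,v}`
is an edge of `G'` exactly when `u` and `v` lie in different parts. -/
theorem VV_vanishes_iff_complete_multipartite {K : Type} [Field K] {n : ℕ}
    (G' : SimpleGraph (Fin n)) :
    (∀ t : ℕ, 1 ≤ t →
        edgeIdeal K G' ⊓ (edgeIdeal K (⊤ : SimpleGraph (Fin n))) ^ t =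
          edgeIdeal K G' * (edgeIdeal K (⊤ : SimpleGraph (Fin n))) ^ (t - 1)) ↔
      ∃ (k : ℕ) (A : Fin k → Set (Fin n)),
        (∀ i, (A i).Nonempty) ∧
        (∀ i j, i ≠ j → Disjoint (A i) (A j)) ∧
        (⋃ i, A i) = Set.univ ∧
        (∀ u v : Fin n, G'.Adj u v ↔ ∃ i j, i ≠ j ∧ u ∈ A i ∧ v ∈ A j) := by
  classical
  constructor
  · intro hLHS
    have hI2 : edgeIdeal K G' ⊓ (edgeIdeal K (⊤ : SimpleGraph (Fin n))) ^ 2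
        = edgeIdeal K G' * (edgeIdeal K (⊤ : SimpleGraph (Fin n))) ^ 1 := by
      have h0 := hLHS 2 (by norm_num)
      rwa [show (2:ℕ) - 1 = 1 from rfl] at h0
    set r : Fin n → Fin n → Prop := fun u v => u = v ∨ ¬ G'.Adj u v with hr
    have hrefl : ∀ u, r u u := fun u => Or.inl rfl
    have hsymm : ∀ {u v}, r u v → r v u := by
      rintro u v (rfl | h)
      · exact Or.inl rfl
      · exact Or.inr fun hA => h (G'.adj_symm hA)
    have htrans : ∀ {u v w}, r u v → r v w → r u w := by
      rintro u v w (rfl | huv) hvw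
      · exact hvw
      · rcases hvw with rfl | hvw
        · exact Or.inr huv
        · by_cases hAuw : G'.Adj u w
          · exfalso
            by_cases h1 : u = v
            · subst h1; exact hvw hAuw
            · by_cases h2 : v = w
              · subst h2; exact huv hAuw
              · exact VVaux.no_bad_triple (K := K) G' hI2 h1 h2 huv hvw hAuw
          · exact Or.inr hAuw
    let st : Setoid (Fin n) := ⟨r, ⟨hrefl, hsymm, htrans⟩⟩
    letI : DecidableEq (Quotient st) := Classical.decEq _
    letI : Fintype (Quotient st) :=
      Fintype.ofSurjective (Quotient.mk st) (fun q => Quotient.exists_rep q)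
    have hiff : ∀ u v, G'.Adj u v ↔ Quotient.mk st u ≠ Quotient.mk st v := by
      intro u v
      constructor
      · intro hA heq
        rcases (Quotient.exact heq : r u v) with rfl | hn
        · exact G'.irrefl hA
        · exact hn hA
      · intro hne
        by_cases hA : G'.Adj u v
        · exact hA
        · exact absurd (Quotient.sound (Or.inr hA)) hne
    exact VVaux.rhs_of_coloring G' (Quotient.mk st) hiff
  · rintro ⟨k, A, hne, hdisj, huniv, hadj⟩ t ht
    obtain ⟨c, hc⟩ := VVaux.coloring_of_rhs G' A hdisj huniv hadj
    obtain ⟨t', rfl⟩ : ∃ t', t = t' + 1 := ⟨t - 1, by omega⟩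
    have := VVaux.ideal_eq_of_coloring (K := K) G' c hc t'
    rw [Nat.add_sub_cancel]
    exact this
end

section
/- Let C be a complete d-partite d-uniform clutter on vertex set [n] and C' ⊆ C any subclutter, with facet ideals J = I(C') and I = I(C) in K[x_1,...,x_n] over a field K. Then J ∩ I^t = J·I^{t-1} for all t ≥ 1 (i.e., the Valabrega-Valla module VV_{I(C')⊆I(C)} vanishes). -/
/-- The facet ideal of a clutter `C` on `[n]`: the ideal of `K[x_1,…,x_n]` generated by
the squarefree monomials `x_F = ∏_{i ∈ F} x_i` for `F ∈ C`. -/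
noncomputable def facetIdeal (K : Type) [Field K] {n : ℕ} (C : Set (Finset (Fin n))) :
    Ideal (MvPolynomial (Fin n) K) :=
  Ideal.span {p | ∃ F ∈ C, p = ∏ i ∈ F, MvPolynomial.X i}
open MvPolynomial Finset

namespace VVaux

noncomputable section

variable {n : ℕ}

/-- exponent vector of a squarefree monomial -/
def ev (F : Finset (Fin n)) : Fin n →₀ ℕ := ∑ i ∈ F, Finsupp.single i 1

lemma prodX_eq (K : Type) [Field K] (F : Finset (Fin n)) :
    (∏ i ∈ F, (X i : MvPolynomial (Fin n) K)) = monomial (ev F) 1 := by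
  classical
  induction F using Finset.cons_induction with
  | empty => simp [ev]
  | cons a s ha ih =>
    have hx : (X a : MvPolynomial (Fin n) K) = monomial (Finsupp.single a 1) 1 := rfl
    have hev : ev (Finset.cons a s ha) = Finsupp.single a 1 + ev s := Finset.sum_cons ha
    rw [Finset.prod_cons, ih, hx, monomial_mul, one_mul, hev]

lemma facetIdeal_eq (K : Type) [Field K] (C : Set (Finset (Fin n))) :
    facetIdeal K C = Ideal.span ((fun s => monomial s (1 : K)) '' (ev '' C)) := by
  unfold facetIdeal
  congr 1
  ext p
  constructor
  · rintro ⟨F, hF, rfl⟩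
    exact ⟨ev F, ⟨F, hF, rfl⟩, (prodX_eq K F).symm⟩
  · rintro ⟨s, ⟨F, hF, rfl⟩, rfl⟩
    exact ⟨F, hF, (prodX_eq K F).symm⟩

/-- exponent vectors of products of `t` generators -/
def St (C : Set (Finset (Fin n))) (t : ℕ) : Set (Fin n →₀ ℕ) :=
  {s | ∃ g : Fin t → Finset (Fin n), (∀ i, g i ∈ C) ∧ s = ∑ i, ev (g i)}

lemma span_mono_mul (K : Type) [Field K] (A B : Set (Fin n →₀ ℕ)) :
    Ideal.span ((fun s => monomial s (1 : K)) '' A) *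
      Ideal.span ((fun s => monomial s (1 : K)) '' B) =
      Ideal.span ((fun s => monomial s (1 : K)) '' (Set.image2 (· + ·) A B)) := by
  rw [Ideal.span_mul_span', ← Set.image2_mul, Set.image2_image_left, Set.image2_image_right,
    Set.image_image2]
  congr 1
  apply Set.image2_congr
  intro a _ b _
  rw [monomial_mul, one_mul]

lemma pow_eq (K : Type) [Field K] (C : Set (Finset (Fin n))) (t : ℕ) :
    (facetIdeal K C) ^ t = Ideal.span ((fun s => monomial s (1 : K)) '' St C t) := by
  induction t with
  | zero =>
    have h0 : St C 0 = {0} := by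
      ext s
      simp only [St, Set.mem_setOf_eq, Set.mem_singleton_iff]
      constructor
      · rintro ⟨g, _, rfl⟩; simp
      · rintro rfl; exact ⟨Fin.elim0, fun i => i.elim0, by simp⟩
    rw [pow_zero, h0]
    simp only [Set.image_singleton, monomial_zero', MvPolynomial.C_1]
    rw [Ideal.span_singleton_one]
    exact Ideal.one_eq_top
  | succ t ih =>
    have himg : Set.image2 (· + ·) (St C t) (ev '' C) = St C (t + 1) := by
      ext s
      constructor
      · rintro ⟨a, ⟨g, hg, rfl⟩, b, ⟨G, hG, rfl⟩, rfl⟩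
        refine ⟨Fin.snoc g G, ?_, ?_⟩
        · intro i
          induction i using Fin.lastCases with
          | last => simpa using hG
          | cast i => simpa using hg i
        · rw [Fin.sum_univ_castSucc]
          simp [Fin.snoc_castSucc, Fin.snoc_last]
      · rintro ⟨g, hg, rfl⟩
        refine ⟨∑ i : Fin t, ev (g i.castSucc), ⟨fun i => g i.castSucc, fun i => hg _, rfl⟩,
          ev (g (Fin.last t)), ⟨g (Fin.last t), hg _, rfl⟩, ?_⟩
        rw [Fin.sum_univ_castSucc]
      
    rw [pow_succ, ih, facetIdeal_eq, span_mono_mul, himg]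

variable {d : ℕ}

lemma trans_inj (V : Fin d → Finset (Fin n)) (hdisj : ∀ i j, i ≠ j → Disjoint (V i) (V j))
    (f : Fin d → Fin n) (hf : ∀ p, f p ∈ V p) : Function.Injective f := by
  intro p q h
  by_contra hne
  exact Finset.disjoint_left.mp (hdisj p q hne) (hf p) (by rw [h]; exact hf q)

lemma mem_C_iff (V : Fin d → Finset (Fin n)) (hdisj : ∀ i j, i ≠ j → Disjoint (V i) (V j))
    (F : Finset (Fin n)) :
    (F.card = d ∧ ∀ i, (F ∩ V i).card = 1) ↔
      ∃ f : Fin d → Fin n, (∀ p, f p ∈ V p) ∧ F = Finset.image f Finset.univ := by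
  constructor
  · rintro ⟨hcard, hone⟩
    have hex : ∀ p, ∃ a, F ∩ V p = {a} := fun p => Finset.card_eq_one.mp (hone p)
    choose f hf using hex
    have hfmem : ∀ p, f p ∈ F ∩ V p := fun p => by rw [hf p]; exact Finset.mem_singleton_self _
    have hfV : ∀ p, f p ∈ V p := fun p => (Finset.mem_inter.mp (hfmem p)).2
    have hfF : ∀ p, f p ∈ F := fun p => (Finset.mem_inter.mp (hfmem p)).1
    have hinj : Function.Injective f := trans_inj V hdisj f hfV
    refine ⟨f, hfV, ?_⟩
    have hsub : Finset.image f Finset.univ ⊆ F := by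
      intro x hx
      obtain ⟨p, _, rfl⟩ := Finset.mem_image.mp hx
      exact hfF p
    have hc : F.card ≤ (Finset.image f Finset.univ).card := by
      rw [Finset.card_image_of_injective _ hinj, Finset.card_univ, Fintype.card_fin, hcard]
    exact (Finset.eq_of_subset_of_card_le hsub hc).symm
  · rintro ⟨f, hfV, rfl⟩
    have hinj : Function.Injective f := trans_inj V hdisj f hfV
    constructor
    · rw [Finset.card_image_of_injective _ hinj, Finset.card_univ, Fintype.card_fin]
    · intro p
      have : Finset.image f Finset.univ ∩ V p = {f p} := by
        ext x
        simp only [Finset.mem_inter, Finset.mem_image, Finset.mem_singleton]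
        constructor
        · rintro ⟨⟨q, _, rfl⟩, hxV⟩
          by_contra hne
          have hq : q ≠ p := fun h => hne (by rw [h])
          exact Finset.disjoint_left.mp (hdisj q p hq) (hfV q) hxV
        · rintro rfl
          exact ⟨⟨p, Finset.mem_univ p, rfl⟩, hfV p⟩
      rw [this, Finset.card_singleton]

lemma ev_image_apply (f : Fin d → Fin n) (hinj : Function.Injective f) (v : Fin n) :
    ev (Finset.image f Finset.univ) v = ∑ p, if f p = v then 1 else 0 := by
  rw [ev, Finset.sum_image (fun x _ y _ h => hinj h)]
  rw [Finsupp.finset_sum_apply]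
  exact Finset.sum_congr rfl fun p _ => Finsupp.single_apply

lemma trans_apply (V : Fin d → Finset (Fin n)) (hdisj : ∀ i j, i ≠ j → Disjoint (V i) (V j))
    (f : Fin d → Fin n) (hf : ∀ p, f p ∈ V p) (v : Fin n) (p0 : Fin d) (hv : v ∈ V p0) :
    (∑ p, if f p = v then 1 else 0) = if f p0 = v then 1 else 0 := by
  apply Finset.sum_eq_single p0
  · intro p _ hp
    refine if_neg fun h => ?_
    exact Finset.disjoint_left.mp (hdisj p p0 hp) (hf p) (by rw [h]; exact hv)
  · intro h
    exact absurd (Finset.mem_univ p0) h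

lemma trans_zero (V : Fin d → Finset (Fin n)) (f : Fin d → Fin n) (hf : ∀ p, f p ∈ V p)
    (v : Fin n) (hv : ∀ p, v ∉ V p) :
    (∑ p, if f p = v then 1 else 0) = 0 :=
  Finset.sum_eq_zero fun p _ => if_neg fun h => hv p (by rw [← h]; exact hf p)

lemma key {t' : ℕ} (V : Fin d → Finset (Fin n))
    (hdisj : ∀ i j, i ≠ j → Disjoint (V i) (V j))
    (fF : Fin d → Fin n) (hfF : ∀ p, fF p ∈ V p)
    (gf : Fin (t' + 1) → Fin d → Fin n) (hgf : ∀ i p, gf i p ∈ V p)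
    (m : Fin n →₀ ℕ)
    (h1 : ∀ v, (∑ p, if fF p = v then 1 else 0) ≤ m v)
    (h2 : ∀ v, (∑ i, ∑ p, if gf i p = v then 1 else 0) ≤ m v) :
    ∃ hfun : Fin t' → Fin d → Fin n, (∀ j p, hfun j p ∈ V p) ∧
      ∀ v, ((∑ p, if fF p = v then 1 else 0) +
        ∑ j, ∑ p, if hfun j p = v then 1 else 0) ≤ m v := by
  classical
  set ip : Fin d → Fin (t' + 1) :=
    fun p => if h : ∃ i, gf i p = fF p then h.choose else 0 with hip
  refine ⟨fun j p => gf ((ip p).succAbove j) p, fun j p => hgf _ p, ?_⟩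
  intro v
  by_cases hv : ∃ p0, v ∈ V p0
  · obtain ⟨p0, hp0⟩ := hv
    rw [trans_apply V hdisj fF hfF v p0 hp0]
    have hrw : ∀ j : Fin t',
        (∑ p, if gf ((ip p).succAbove j) p = v then 1 else 0) =
          if gf ((ip p0).succAbove j) p0 = v then 1 else 0 :=
      fun j => trans_apply V hdisj _ (fun p => hgf _ p) v p0 hp0
    simp only [hrw]
    have h2' : (∑ i, if gf i p0 = v then 1 else 0) ≤ m v := by
      have h := h2 v
      rwa [Finset.sum_congr rfl
        (fun i _ => trans_apply V hdisj (gf i) (hgf i) v p0 hp0)] at h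
    rw [Fin.sum_univ_succAbove (fun i => if gf i p0 = v then 1 else 0) (ip p0)] at h2'
    by_cases hfv : fF p0 = v
    · rw [if_pos hfv]
      by_cases hex : ∃ i, gf i p0 = fF p0
      · have hch : gf (ip p0) p0 = fF p0 := by
          have : ip p0 = hex.choose := by rw [hip]; simp only [dif_pos hex]
          rw [this]; exact hex.choose_spec
        rwa [if_pos (by rw [hch, hfv])] at h2'
      · have hall : ∀ j : Fin t', gf ((ip p0).succAbove j) p0 ≠ v :=
          fun j h => hex ⟨_, h.trans hfv.symm⟩
        have hz : (∑ j : Fin t', if gf ((ip p0).succAbove j) p0 = v then 1 else 0) = 0 :=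
          Finset.sum_eq_zero fun j _ => if_neg (hall j)
        rw [hz, add_zero]
        have h := h1 v
        rwa [trans_apply V hdisj fF hfF v p0 hp0, if_pos hfv] at h
    · rw [if_neg hfv, zero_add]
      exact le_trans (Nat.le_add_left _ _) h2'
  · push_neg at hv
    rw [trans_zero V fF hfF v hv, zero_add]
    have hz : ∀ j : Fin t',
        (∑ p, if gf ((ip p).succAbove j) p = v then 1 else 0) = 0 :=
      fun j => trans_zero V _ (fun p => hgf _ p) v hv
    simp only [hz]
    simp

end
end VVaux

/-- Let `C` be a complete `d`-partite `d`-uniform clutter on `[n]`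
(with `d`-partition `V_1, …, V_d`: pairwise disjoint, and `C` consists exactly of all
`d`-subsets meeting each `V_i` in exactly one vertex) and `C' ⊆ C` any subclutter.
With `J = I(C')` and `I = I(C)` one has `J ∩ I^t = J·I^{t-1}` for all `t ≥ 1`, i.e. the
Valabrega–Valla module `VV_{I(C') ⊆ I(C)}` vanishes. -/
theorem VV_vanishes_complete_d_partite {K : Type} [Field K] {n d : ℕ}
    (V : Fin d → Finset (Fin n))
    (hdisj : ∀ i j, i ≠ j → Disjoint (V i) (V j))
    (C C' : Set (Finset (Fin n)))
    (hC : C = {F : Finset (Fin n) | F.card = d ∧ ∀ i, (F ∩ V i).card = 1})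
    (hC' : C' ⊆ C) :
    ∀ t : ℕ, 1 ≤ t →
      facetIdeal K C' ⊓ (facetIdeal K C) ^ t =
        facetIdeal K C' * (facetIdeal K C) ^ (t - 1) := by
  classical
  intro t ht
  obtain ⟨t', rfl⟩ : ∃ t', t = t' + 1 := ⟨t - 1, (Nat.succ_pred_eq_of_pos ht).symm⟩
  have hsub : (t' + 1) - 1 = t' := by omega
  rw [hsub]
  have hmemC : ∀ F ∈ C, ∃ f : Fin d → Fin n, (∀ p, f p ∈ V p) ∧ F = Finset.image f Finset.univ := by
    intro F hF
    rw [hC] at hF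
    exact (VVaux.mem_C_iff V hdisj F).mp hF
  apply le_antisymm
  · -- hard direction
    intro x hx
    obtain ⟨hxJ, hxI⟩ := Submodule.mem_inf.mp hx
    rw [VVaux.facetIdeal_eq, MvPolynomial.mem_ideal_span_monomial_image] at hxJ
    rw [VVaux.pow_eq, MvPolynomial.mem_ideal_span_monomial_image] at hxI
    rw [VVaux.facetIdeal_eq, VVaux.pow_eq, VVaux.span_mono_mul,
      MvPolynomial.mem_ideal_span_monomial_image]
    intro xi hxi
    obtain ⟨sF, ⟨F, hF, rfl⟩, hle1⟩ := hxJ xi hxi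
    obtain ⟨sG, ⟨g, hg, rfl⟩, hle2⟩ := hxI xi hxi
    obtain ⟨fF, hfFV, hFeq⟩ := hmemC F (hC' hF)
    have hgc : ∀ i, ∃ f : Fin d → Fin n, (∀ p, f p ∈ V p) ∧ g i = Finset.image f Finset.univ :=
      fun i => hmemC (g i) (hg i)
    choose gf hgfV hgfE using hgc
    have h1 : ∀ v, (∑ p, if fF p = v then 1 else 0) ≤ xi v := by
      intro v
      have h := Finsupp.le_def.mp hle1 v
      rwa [hFeq, VVaux.ev_image_apply fF (VVaux.trans_inj V hdisj fF hfFV)] at h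
    have h2 : ∀ v, (∑ i, ∑ p, if gf i p = v then 1 else 0) ≤ xi v := by
      intro v
      have h := Finsupp.le_def.mp hle2 v
      rw [Finsupp.finset_sum_apply] at h
      rwa [Finset.sum_congr rfl (fun i _ => by
        rw [hgfE i, VVaux.ev_image_apply (gf i) (VVaux.trans_inj V hdisj (gf i) (hgfV i))])] at h
    obtain ⟨hfun, hhV, hkey⟩ := VVaux.key V hdisj fF hfFV gf hgfV xi h1 h2
    refine ⟨VVaux.ev F + ∑ j : Fin t', VVaux.ev (Finset.image (hfun j) Finset.univ),
      ⟨VVaux.ev F, ⟨F, hF, rfl⟩, _, ⟨fun j => Finset.image (hfun j) Finset.univ,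
        fun j => by
          rw [hC]
          exact (VVaux.mem_C_iff V hdisj _).mpr ⟨hfun j, hhV j, rfl⟩, rfl⟩, rfl⟩, ?_⟩
    rw [Finsupp.le_def]
    intro v
    rw [Finsupp.add_apply, Finsupp.finset_sum_apply]
    have hrwj : ∀ j : Fin t', (VVaux.ev (Finset.image (hfun j) Finset.univ)) v
        = ∑ p, if hfun j p = v then 1 else 0 :=
      fun j => VVaux.ev_image_apply (hfun j) (VVaux.trans_inj V hdisj (hfun j) (hhV j)) v
    rw [hFeq, VVaux.ev_image_apply fF (VVaux.trans_inj V hdisj fF hfFV),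
        Finset.sum_congr rfl (fun j _ => hrwj j)]
    exact hkey v
  · -- easy direction
    have hJI : facetIdeal K C' ≤ facetIdeal K C := by
      apply Ideal.span_mono
      rintro p ⟨F, hF, hp⟩
      exact ⟨F, hC' hF, hp⟩
    refine le_inf Ideal.mul_le_left ?_
    calc facetIdeal K C' * (facetIdeal K C) ^ t'
        ≤ facetIdeal K C * (facetIdeal K C) ^ t' := Ideal.mul_mono hJI le_rfl
      _ = (facetIdeal K C) ^ (t' + 1) := (pow_succ' _ _).symm
end
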